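/- Let d ≥ 2 and let S = ⟨A⟩ be the submonoid of ℕ^d generated by a set A ⊆ ℕ^d. Then S has finite complement in ℕ^d if and only if: (1) for every j ∈ {1,…,d} there exist finitely many positive integers a₁,…,a_r with gcd(a₁,…,a_r) = 1 and a₁e_j, …, a_r e_j ∈ A; and (2) for every pair i ≠ k there exists n ∈ ℕ with e_i + n·e_k ∈ A. -/

import Mathlib

private lemma bezout {ι : Type*} [DecidableEq ι] (s : Finset ι) (a : ι → ℕ) :
    ∃ c : ι → ℤ, ∑ t ∈ s, c t * a t = s.gcd a := by
  classical
  induction s using Finset.induction_on with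
  | empty => exact ⟨0, by simp⟩
  | @insert i s hi ih =>
    obtain ⟨c, hc⟩ := ih
    refine ⟨fun t => if t = i then Nat.gcdA (a i) (s.gcd a)
      else Nat.gcdB (a i) (s.gcd a) * c t, ?_⟩
    rw [Finset.sum_insert hi, Finset.gcd_insert]
    simp only [if_pos rfl]
    have h1 : ∑ t ∈ s, (if t = i then Nat.gcdA (a i) (s.gcd a)
        else Nat.gcdB (a i) (s.gcd a) * c t) * (a t : ℤ)
        = Nat.gcdB (a i) (s.gcd a) * ∑ t ∈ s, c t * a t := by
      rw [Finset.mul_sum]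
      refine Finset.sum_congr rfl fun t ht => ?_
      rw [if_neg (show t ≠ i from fun h => hi (h ▸ ht))]; ring
    rw [h1, hc]
    have := Nat.gcd_eq_gcd_ab (a i) (s.gcd a)
    have h2 : GCDMonoid.gcd (a i) (s.gcd a) = Nat.gcd (a i) (s.gcd a) := rfl
    rw [h2, this]
    simp only [if_true]
    ring

private lemma nskey {M : Type*} [AddCommMonoid M] (S : AddSubmonoid M) (v : M) {r : ℕ}
    (a : Fin r → ℕ) (hg : Finset.univ.gcd a = 1) (hA : ∀ t, (a t) • v ∈ S) :
    ∃ F : ℕ, ∀ n, F ≤ n → n • v ∈ S := by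
  obtain ⟨c, hc⟩ := bezout Finset.univ a
  rw [hg] at hc
  set p : Fin r → ℕ := fun t => (c t).toNat with hp
  set q : Fin r → ℕ := fun t => (-(c t)).toNat with hq
  have hsum : ∑ t, p t * a t = (∑ t, q t * a t) + 1 := by
    have h2 : ∑ t, ((p t : ℤ) - (q t : ℤ)) * (a t : ℤ) = 1 := by
      rw [Finset.sum_congr rfl (fun t _ => by
        rw [show (p t : ℤ) - (q t : ℤ) = c t by
          simp only [hp, hq]; omega])]
      exact_mod_cast hc
    have h3 : ((∑ t, p t * a t : ℕ) : ℤ) = (((∑ t, q t * a t) + 1 : ℕ) : ℤ) := by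
      push_cast
      rw [show (1 : ℤ) = ∑ t, ((p t : ℤ) - (q t : ℤ)) * (a t : ℤ) from h2.symm]
      rw [← Finset.sum_add_distrib]
      exact Finset.sum_congr rfl fun t _ => by ring
    exact_mod_cast h3
  set u := ∑ t, q t * a t with hu_def
  have hsmul : ∀ (e : Fin r → ℕ), (∑ t, e t * a t) • v ∈ S := by
    intro e
    rw [Finset.sum_smul]
    exact AddSubmonoid.sum_mem S fun t _ => by
      rw [mul_smul]; exact AddSubmonoid.nsmul_mem S (hA t) _
  have hu : u • v ∈ S := hsmul q
  have hu1 : (u + 1) • v ∈ S := by rw [← hsum]; exact hsmul p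
  refine ⟨u * u, fun n hn => ?_⟩
  rcases Nat.eq_zero_or_pos u with hu0 | hu0
  · have hv : v ∈ S := by simpa [hu0] using hu1
    exact AddSubmonoid.nsmul_mem S hv n
  · set q' := n / u with hq'
    set r' := n % u with hr'
    have hr : r' < u := Nat.mod_lt _ hu0
    have hqr : r' ≤ q' :=
      le_trans (le_of_lt hr) ((Nat.le_div_iff_mul_le hu0).mpr hn)
    obtain ⟨s, hs⟩ := Nat.exists_eq_add_of_le hqr
    have h0 : u * q' + r' = n := Nat.div_add_mod n u
    have hn' : n = s * u + r' * (u + 1) := by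
      rw [hs] at h0; rw [← h0]; ring
    rw [hn', add_smul, mul_smul, mul_smul]
    exact S.add_mem (AddSubmonoid.nsmul_mem S hu s) (AddSubmonoid.nsmul_mem S hu1 r')

private lemma eval_list_sum {d : ℕ} (l : List (Fin d → ℕ)) (i : Fin d) :
    (l.map (fun z => z i)).sum = l.sum i := by
  induction l with
  | nil => simp
  | cons x xs ih => simp [ih]

private lemma axis_elts {d : ℕ} (j : Fin d) (l : List (Fin d → ℕ)) (n : ℕ)
    (hsum : l.sum = n • Pi.single j 1) :
    ∀ y ∈ l, y = (y j) • Pi.single j (1 : ℕ) := by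
  intro y hy
  funext i
  rcases eq_or_ne i j with rfl | hij
  · simp
  · have hle : y i ≤ (l.map (fun z => z i)).sum :=
      List.le_sum_of_mem (List.mem_map_of_mem (f := fun z => z i) hy)
    rw [eval_list_sum, hsum] at hle
    simp only [Pi.smul_apply, smul_eq_mul, Pi.single_eq_of_ne hij, mul_zero,
      Nat.le_zero] at hle
    simp [hle, Pi.single_eq_of_ne hij]

private lemma cofin_axis {d : ℕ} {S : AddSubmonoid (Fin d → ℕ)}
    (hfin : ((S : Set (Fin d → ℕ))ᶜ).Finite) (f : ℕ → (Fin d → ℕ))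
    (hinj : Function.Injective f) : ∃ N : ℕ, ∀ n, N ≤ n → f n ∈ S := by
  have hT : {n : ℕ | f n ∉ S}.Finite := by
    have := Set.Finite.preimage (hinj.injOn) hfin
    exact this
  obtain ⟨N, hN⟩ := hT.bddAbove
  exact ⟨N + 1, fun n hn => by_contra fun h => by
    have := hN (Set.mem_setOf_eq ▸ h : n ∈ {n : ℕ | f n ∉ S})
    omega⟩

private lemma fwd1 {d : ℕ} (A : Set (Fin d → ℕ))
    (hfin : ((AddSubmonoid.closure A : Set (Fin d → ℕ))ᶜ).Finite) (j : Fin d) :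
    ∃ (r : ℕ) (a : Fin r → ℕ), 0 < r ∧ (∀ t, 0 < a t) ∧
      Finset.univ.gcd a = 1 ∧ ∀ t, (a t) • Pi.single j (1 : ℕ) ∈ A := by
  classical
  set S := AddSubmonoid.closure A with hS
  have hinj : Function.Injective (fun n : ℕ => n • (Pi.single j 1 : Fin d → ℕ)) := by
    intro m n h
    have := congrFun h j
    simpa using this
  obtain ⟨N₀, hN₀⟩ := cofin_axis hfin _ hinj
  set N := max N₀ 1 with hN_def
  have h₁ : N • Pi.single j (1:ℕ) ∈ S := hN₀ N (le_max_left _ _)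
  have h₂ : (N+1) • Pi.single j (1:ℕ) ∈ S :=
    hN₀ _ (le_trans (le_max_left _ _) (Nat.le_succ N))
  obtain ⟨l₁, hl₁A, hl₁s⟩ := AddSubmonoid.exists_list_of_mem_closure h₁
  obtain ⟨l₂, hl₂A, hl₂s⟩ := AddSubmonoid.exists_list_of_mem_closure h₂
  have key : ∀ y ∈ l₁ ++ l₂, y = (y j) • Pi.single j (1:ℕ) := by
    intro y hy
    rcases List.mem_append.mp hy with h | h
    · exact axis_elts j l₁ N hl₁s y h
    · exact axis_elts j l₂ (N+1) hl₂s y h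
  have hmemA : ∀ y ∈ l₁ ++ l₂, y ∈ A := by
    intro y hy
    rcases List.mem_append.mp hy with h | h
    · exact hl₁A y h
    · exact hl₂A y h
  set L := (l₁ ++ l₂).filter (fun y => y ≠ 0) with hL
  refine ⟨L.length, fun t => L.get t j, ?_, ?_, ?_, ?_⟩
  · rcases Nat.eq_zero_or_pos L.length with h0 | h
    swap
    · exact h
    exfalso
    have hnil : L = [] := List.length_eq_zero_iff.mp h0
    have hall : ∀ y ∈ l₁ ++ l₂, y = 0 := by
      intro y hy
      have := List.filter_eq_nil_iff.mp hnil y hy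
      simpa using this
    have hz : l₂.sum = 0 :=
      List.sum_eq_zero fun y hy => hall y (List.mem_append_right _ hy)
    rw [hl₂s] at hz
    have := congrFun hz j
    simp at this
  · intro t
    have hmem : L.get t ∈ L := L.get_mem t
    obtain ⟨hy, hne⟩ := List.mem_filter.mp hmem
    have hne' : L.get t ≠ 0 := by simpa using hne
    show 0 < L.get t j
    by_contra hpo
    have h0 : L.get t j = 0 := by omega
    exact hne' (by rw [key _ hy, h0, zero_smul])
  · set g := Finset.univ.gcd (fun t : Fin L.length => L.get t j) with hg
    have hdvd : ∀ y ∈ l₁ ++ l₂, g ∣ y j := by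
      intro y hy
      by_cases hy0 : y = 0
      · simp [hy0]
      · have hyL : y ∈ L := List.mem_filter.mpr ⟨hy, by simpa using hy0⟩
        obtain ⟨t, ht⟩ := List.mem_iff_get.mp hyL
        have h := Finset.gcd_dvd (f := fun t : Fin L.length => L.get t j)
          (Finset.mem_univ t)
        rw [← ht]
        exact h
    have hdN : ∀ (l : List (Fin d → ℕ)) (m : ℕ), (∀ y ∈ l, g ∣ y j) →
        l.sum = m • Pi.single j (1 : ℕ) → g ∣ m := by
      intro l m hdl hls
      have hd2 : g ∣ (l.map (fun z => z j)).sum :=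
        List.dvd_sum fun x hx => by
          obtain ⟨y, hy, rfl⟩ := List.mem_map.mp hx
          exact hdl y hy
      rw [eval_list_sum, hls] at hd2
      simpa using hd2
    have hgN : g ∣ N := hdN l₁ N (fun y hy => hdvd y (List.mem_append_left _ hy)) hl₁s
    have hgN1 : g ∣ N + 1 := hdN l₂ (N+1) (fun y hy => hdvd y (List.mem_append_right _ hy)) hl₂s
    have hone : g ∣ 1 := by
      have := Nat.dvd_sub hgN1 hgN
      simpa using this
    exact Nat.dvd_one.mp hone
  · intro t
    have hmem : L.get t ∈ L := L.get_mem t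
    have hy := (List.mem_filter.mp hmem).1
    rw [← key _ hy]
    exact hmemA _ hy

private lemma fwd2 {d : ℕ} (A : Set (Fin d → ℕ))
    (hfin : ((AddSubmonoid.closure A : Set (Fin d → ℕ))ᶜ).Finite) (i k : Fin d)
    (hik : i ≠ k) :
    ∃ n : ℕ, Pi.single i (1 : ℕ) + n • Pi.single k (1 : ℕ) ∈ A := by
  classical
  have hinj : Function.Injective
      (fun n : ℕ => (Pi.single i 1 : Fin d → ℕ) + n • (Pi.single k 1 : Fin d → ℕ)) := by
    intro m n h
    have := congrFun h k
    simpa [Pi.single_eq_of_ne (Ne.symm hik)] using this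
  obtain ⟨N, hN⟩ := cofin_axis hfin _ hinj
  have hmem := hN N le_rfl
  obtain ⟨l, hlA, hls⟩ := AddSubmonoid.exists_list_of_mem_closure hmem
  have hsum_i : (l.map (fun z => z i)).sum = 1 := by
    rw [eval_list_sum, hls]
    simp [Pi.single_eq_of_ne hik]
  have hex : ∃ y ∈ l, y i ≠ 0 := by
    by_contra h
    push_neg at h
    have hz : (l.map (fun z => z i)).sum = 0 := by
      apply List.sum_eq_zero
      intro x hx
      obtain ⟨y, hy, rfl⟩ := List.mem_map.mp hx
      exact h y hy
    exact one_ne_zero (hsum_i.symm.trans hz)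
  obtain ⟨y, hy, hyi⟩ := hex
  have hyi1 : y i = 1 :=
    le_antisymm (hsum_i ▸ List.le_sum_of_mem (List.mem_map_of_mem (f := fun z => z i) hy))
      (Nat.one_le_iff_ne_zero.mpr hyi)
  refine ⟨y k, ?_⟩
  have hyeq : Pi.single i (1 : ℕ) + (y k) • Pi.single k (1 : ℕ) = y := by
    funext m
    rcases eq_or_ne m i with rfl | hmi
    · simp [Pi.single_eq_of_ne hik, hyi1]
    · rcases eq_or_ne m k with rfl | hmk
      · simp [Pi.single_eq_of_ne (Ne.symm hik)]
      · have hle : y m ≤ (l.map (fun z => z m)).sum :=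
          List.le_sum_of_mem (List.mem_map_of_mem (f := fun z => z m) hy)
        rw [eval_list_sum, hls] at hle
        simp only [Pi.add_apply, Pi.smul_apply, smul_eq_mul,
          Pi.single_eq_of_ne hmi, Pi.single_eq_of_ne hmk, mul_zero, add_zero,
          Nat.le_zero] at hle
        simp [Pi.single_eq_of_ne hmi, Pi.single_eq_of_ne hmk, hle]
  rw [hyeq]
  exact hlA y hy

private lemma bwd {d : ℕ} (A : Set (Fin d → ℕ))
    (h1 : ∀ j : Fin d, ∃ (r : ℕ) (a : Fin r → ℕ), 0 < r ∧ (∀ t, 0 < a t) ∧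
          Finset.univ.gcd a = 1 ∧ ∀ t, (a t) • Pi.single j (1 : ℕ) ∈ A)
    (h2 : ∀ i k : Fin d, i ≠ k →
        ∃ n : ℕ, Pi.single i (1 : ℕ) + n • Pi.single k (1 : ℕ) ∈ A) :
    ((AddSubmonoid.closure A : Set (Fin d → ℕ))ᶜ).Finite := by
  classical
  set S := AddSubmonoid.closure A with hS
  have hax : ∀ j : Fin d, ∃ F : ℕ, ∀ n, F ≤ n → n • (Pi.single j 1 : Fin d → ℕ) ∈ S := by
    intro j
    obtain ⟨r, a, _, _, hg, hA⟩ := h1 j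
    exact nskey S _ a hg fun t => AddSubmonoid.subset_closure (hA t)
  choose F hF using hax
  have hm : ∀ i k : Fin d, ∃ mv : ℕ, i ≠ k →
      Pi.single i (1:ℕ) + mv • Pi.single k (1:ℕ) ∈ A := by
    intro i k
    by_cases h : i = k
    · exact ⟨0, fun hc => absurd h hc⟩
    · obtain ⟨n, hn⟩ := h2 i k h
      exact ⟨n, fun _ => hn⟩
  choose m hmA using hm
  set Fm := Finset.univ.sup F with hFm
  set Mm := Finset.univ.sup (fun i : Fin d => Finset.univ.sup (m i)) with hMm
  set D := d * (Fm * Mm) with hD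
  set B := Fm + D + 1 with hB
  have main : ∀ x : Fin d → ℕ, (∃ k, B ≤ x k) → x ∈ S := by
    rintro x ⟨k, hk⟩
    set T := ∑ i ∈ Finset.univ.erase k, (if x i < Fm then x i * m i k else 0) with hT_def
    have hT : T ≤ D := by
      have hb : ∀ i ∈ Finset.univ.erase k,
          (if x i < Fm then x i * m i k else 0) ≤ Fm * Mm := by
        intro i _
        by_cases hxi : x i < Fm
        · rw [if_pos hxi]
          exact Nat.mul_le_mul (le_of_lt hxi)
            (le_trans (Finset.le_sup (f := m i) (Finset.mem_univ k))
              (Finset.le_sup (f := fun i : Fin d => Finset.univ.sup (m i))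
                (Finset.mem_univ i)))
        · rw [if_neg hxi]; exact Nat.zero_le _
      calc T ≤ ∑ _i ∈ Finset.univ.erase k, Fm * Mm := Finset.sum_le_sum hb
        _ = (Finset.univ.erase k).card * (Fm * Mm) := by
            rw [Finset.sum_const, smul_eq_mul]
        _ ≤ d * (Fm * Mm) := Nat.mul_le_mul_right _
            (le_trans (Finset.card_le_card (Finset.erase_subset _ _)) (by simp))
    have hTk : T + Fm ≤ x k := by omega
    have hdecomp : x = (∑ i ∈ Finset.univ.erase k,
        (x i • (Pi.single i 1 : Fin d → ℕ)
          + (if x i < Fm then x i * m i k else 0) • (Pi.single k 1 : Fin d → ℕ)))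
        + (x k - T) • (Pi.single k 1 : Fin d → ℕ) := by
      funext jj
      rcases eq_or_ne jj k with heq | hjk
      · subst heq
        have hsum : ∀ i ∈ Finset.univ.erase jj,
            (x i • (Pi.single i 1 : Fin d → ℕ)
              + (if x i < Fm then x i * m i jj else 0) • (Pi.single jj 1 : Fin d → ℕ)) jj
            = (if x i < Fm then x i * m i jj else 0) := by
          intro i hi
          have hik : i ≠ jj := Finset.ne_of_mem_erase hi
          by_cases hxi : x i < Fm <;>
            simp [hxi, Pi.single_eq_of_ne (Ne.symm hik), Pi.single_eq_same]
        rw [Pi.add_apply, Finset.sum_apply, Finset.sum_congr rfl hsum, ← hT_def]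
        simp only [Pi.smul_apply, smul_eq_mul, Pi.single_eq_same, mul_one]
        omega
      · have hsum : ∀ i ∈ Finset.univ.erase k,
            (x i • (Pi.single i 1 : Fin d → ℕ)
              + (if x i < Fm then x i * m i k else 0) • (Pi.single k 1 : Fin d → ℕ)) jj
            = (if jj = i then x i else 0) := by
          intro i hi
          rcases eq_or_ne jj i with rfl | hji
          · by_cases hxi : x jj < Fm <;> simp [hxi, Pi.single_eq_of_ne hjk]
          · by_cases hxi : x i < Fm <;>
              simp [hxi, Pi.single_eq_of_ne hjk, Pi.single_eq_of_ne (Ne.symm hji), hji]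
        rw [Pi.add_apply, Finset.sum_apply, Finset.sum_congr rfl hsum]
        rw [Finset.sum_ite_eq (Finset.univ.erase k) jj x]
        simp [Finset.mem_erase, hjk, Pi.single_eq_of_ne hjk]
    rw [hdecomp]
    apply S.add_mem
    · apply AddSubmonoid.sum_mem
      intro i hi
      have hik : i ≠ k := Finset.ne_of_mem_erase hi
      by_cases hxi : x i < Fm
      · rw [if_pos hxi]
        have heq : x i • (Pi.single i 1 : Fin d → ℕ)
            + (x i * m i k) • (Pi.single k 1 : Fin d → ℕ)
            = x i • ((Pi.single i 1 : Fin d → ℕ) + m i k • Pi.single k 1) := by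
          rw [smul_add, mul_smul]
        rw [heq]
        exact AddSubmonoid.nsmul_mem S (AddSubmonoid.subset_closure (hmA i k hik)) _
      · rw [if_neg hxi, zero_smul, add_zero]
        exact hF i (x i) (le_trans (Finset.le_sup (Finset.mem_univ i)) (not_lt.mp hxi))
    · exact hF k _ (le_trans (Finset.le_sup (Finset.mem_univ k)) (by omega))
  refine Set.Finite.subset (Set.Finite.pi (fun _ : Fin d => Set.finite_Iio B)) ?_
  intro x hx
  simp only [Set.mem_pi, Set.mem_univ, forall_true_left, Set.mem_Iio]
  intro j
  by_contra hj
  push_neg at hj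
  exact hx (main x ⟨j, hj⟩)

theorem stmt15 {d : ℕ} (hd : 2 ≤ d) (A : Set (Fin d → ℕ)) :
    ((AddSubmonoid.closure A : Set (Fin d → ℕ))ᶜ).Finite ↔
      (∀ j : Fin d, ∃ (r : ℕ) (a : Fin r → ℕ), 0 < r ∧ (∀ t, 0 < a t) ∧
          Finset.univ.gcd a = 1 ∧ ∀ t, (a t) • Pi.single j (1 : ℕ) ∈ A) ∧
      (∀ i k : Fin d, i ≠ k →
        ∃ n : ℕ, Pi.single i (1 : ℕ) + n • Pi.single k (1 : ℕ) ∈ A) := by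
  constructor
  · intro hfin
    exact ⟨fun j => fwd1 A hfin j, fun i k hik => fwd2 A hfin i k hik⟩
  · rintro ⟨h1, h2⟩
    exact bwd A h1 h2
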